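/- Let n be a positive natural number, A, W, G : Matrix (Fin n) (Fin n) ℝ with G symmetric (Gᵀ = G), P : ℝ → Matrix (Fin n) (Fin n) ℝ, e : ℝ → (Fin n → ℝ), and t : ℝ. Assume IsUnit (P t), (P t)ᵀ = P t, that P has derivative A * P t + P t * Aᵀ + W - P t * G * P t at t (HasDerivAt), and that e has derivative ((A - P t * G) *ᵥ e t) at t. Then the function V : ℝ → ℝ, V s = (e s) ⬝ᵥ ((P s)⁻¹ *ᵥ e s), has derivative -( (e t) ⬝ᵥ (((P t)⁻¹ * W * (P t)⁻¹ + G) *ᵥ e t) ) at t. -/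

import Mathlib

open Matrix

section aux

attribute [local instance] Matrix.linftyOpNormedRing Matrix.linftyOpNormedAlgebra

lemma aux_inv_entry_deriv {n : ℕ} (P : ℝ → Matrix (Fin n) (Fin n) ℝ)
    (P' : Matrix (Fin n) (Fin n) ℝ) (t : ℝ) (hU : IsUnit (P t))
    (h : ∀ i j, HasDerivAt (fun s => P s i j) (P' i j) t) (i j : Fin n) :
    HasDerivAt (fun s => (P s)⁻¹ i j)
      ((-((P t)⁻¹ * P' * (P t)⁻¹)) i j) t := by
  have hP : HasDerivAt P P' t := by
    have key : ∀ s, P s = ∑ p : Fin n, ∑ q : Fin n,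
        P s p q • Matrix.single p q (1 : ℝ) := by
      intro s
      simp only [Matrix.smul_single, smul_eq_mul, mul_one]
      exact Matrix.matrix_eq_sum_single (P s)
    have key' : P' = ∑ p : Fin n, ∑ q : Fin n,
        P' p q • Matrix.single p q (1 : ℝ) := by
      simp only [Matrix.smul_single, smul_eq_mul, mul_one]
      exact Matrix.matrix_eq_sum_single P'
    rw [key']
    have : HasDerivAt (fun s => ∑ p : Fin n, ∑ q : Fin n,
        P s p q • Matrix.single p q (1 : ℝ))
        (∑ p : Fin n, ∑ q : Fin n, P' p q • Matrix.single p q (1 : ℝ)) t := by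
      apply HasDerivAt.fun_sum
      intro p _
      apply HasDerivAt.fun_sum
      intro q _
      exact (h p q).smul_const _
    exact this.congr_of_eventuallyEq (Filter.Eventually.of_forall key)
  obtain ⟨u, hu⟩ := hU
  have hinv : HasFDerivAt Ring.inverse
      (-ContinuousLinearMap.mulLeftRight ℝ (Matrix (Fin n) (Fin n) ℝ) ↑u⁻¹ ↑u⁻¹) (P t) :=
    hu ▸ hasFDerivAt_ringInverse u
  have hQ : HasDerivAt (fun s => Ring.inverse (P s))
      (-(((u⁻¹ : (Matrix (Fin n) (Fin n) ℝ)ˣ) : Matrix (Fin n) (Fin n) ℝ) * P' *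
        ((u⁻¹ : (Matrix (Fin n) (Fin n) ℝ)ˣ) : Matrix (Fin n) (Fin n) ℝ))) t := by
    have := hinv.comp_hasDerivAt t hP
    exact this
  have hcoe : ((u⁻¹ : (Matrix (Fin n) (Fin n) ℝ)ˣ) : Matrix (Fin n) (Fin n) ℝ) = (P t)⁻¹ := by
    rw [Matrix.coe_units_inv, hu]
  rw [hcoe] at hQ
  have hQ' : HasDerivAt (fun s => (P s)⁻¹) (-((P t)⁻¹ * P' * (P t)⁻¹)) t := by
    simpa only [Matrix.nonsing_inv_eq_ringInverse] using hQ
  -- extract entry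
  set L : Matrix (Fin n) (Fin n) ℝ →ₗ[ℝ] ℝ :=
    { toFun := fun M => M i j, map_add' := fun _ _ => rfl, map_smul' := fun _ _ => rfl }
  have := (L.toContinuousLinearMap.hasFDerivAt).comp_hasDerivAt t hQ'
  exact this

end aux

attribute [local instance] Matrix.normedAddCommGroup Matrix.normedSpace

theorem stmt14 {n : ℕ} (hn : 0 < n) (A W G : Matrix (Fin n) (Fin n) ℝ)
    (hGsym : Gᵀ = G)
    (P : ℝ → Matrix (Fin n) (Fin n) ℝ) (e : ℝ → (Fin n → ℝ)) (t : ℝ)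
    (hPunit : IsUnit (P t)) (hPsym : (P t)ᵀ = P t)
    (hP : HasDerivAt P (A * P t + P t * Aᵀ + W - P t * G * P t) t)
    (he : HasDerivAt e ((A - P t * G) *ᵥ e t) t) :
    HasDerivAt (fun s => (e s) ⬝ᵥ ((P s)⁻¹ *ᵥ e s))
      (-((e t) ⬝ᵥ (((P t)⁻¹ * W * (P t)⁻¹ + G) *ᵥ e t))) t := by
  set Q : Matrix (Fin n) (Fin n) ℝ := (P t)⁻¹ with hQdef
  set Pd : Matrix (Fin n) (Fin n) ℝ := A * P t + P t * Aᵀ + W - P t * G * P t with hPd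
  set Q' : Matrix (Fin n) (Fin n) ℝ := -(Q * Pd * Q) with hQ'
  set e' : Fin n → ℝ := (A - P t * G) *ᵥ e t with he'
  -- entrywise derivatives of P
  have hPij : ∀ i j, HasDerivAt (fun s => P s i j) (Pd i j) t := by
    intro i j
    set L : Matrix (Fin n) (Fin n) ℝ →ₗ[ℝ] ℝ :=
      { toFun := fun M => M i j, map_add' := fun _ _ => rfl, map_smul' := fun _ _ => rfl }
    have := (L.toContinuousLinearMap.hasFDerivAt).comp_hasDerivAt t hP
    exact this
  have hQij : ∀ i j, HasDerivAt (fun s => (P s)⁻¹ i j) (Q' i j) t :=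
    fun i j => aux_inv_entry_deriv P Pd t hPunit hPij i j
  have hei : ∀ i, HasDerivAt (fun s => e s i) (e' i) t := fun i => hasDerivAt_pi.mp he i
  have hdet : IsUnit (P t).det := (Matrix.isUnit_iff_isUnit_det _).mp hPunit
  have hQP : Q * P t = 1 := Matrix.nonsing_inv_mul _ hdet
  have hPQ : P t * Q = 1 := Matrix.mul_nonsing_inv _ hdet
  -- the sum form of V and its derivative
  have hV : HasDerivAt (fun s => ∑ i, e s i * ∑ j, (P s)⁻¹ i j * e s j)
      (∑ i, (e' i * ∑ j, Q i j * e t j +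
        e t i * ∑ j, (Q' i j * e t j + Q i j * e' j))) t := by
    apply HasDerivAt.fun_sum
    intro i _
    exact (hei i).mul ((HasDerivAt.fun_sum fun j _ => ((hQij i j).mul (hei j))))
  have hfun : (fun s => (e s) ⬝ᵥ ((P s)⁻¹ *ᵥ e s)) =
      fun s => ∑ i, e s i * ∑ j, (P s)⁻¹ i j * e s j := by
    funext s
    simp [dotProduct, Matrix.mulVec]
  rw [hfun]
  convert hV using 1
  -- identify the derivative value
  have hsum : (∑ i, (e' i * ∑ j, Q i j * e t j +
        e t i * ∑ j, (Q' i j * e t j + Q i j * e' j))) =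
      e' ⬝ᵥ (Q *ᵥ e t) + (e t ⬝ᵥ (Q' *ᵥ e t) + e t ⬝ᵥ (Q *ᵥ e')) := by
    simp [dotProduct, Matrix.mulVec, mul_add, Finset.mul_sum,
      Finset.sum_add_distrib]
  rw [hsum]
  -- turn everything into e ⬝ᵥ (M *ᵥ e)
  have hstep : ∀ (M : Matrix (Fin n) (Fin n) ℝ) (v w : Fin n → ℝ),
      (M *ᵥ v) ⬝ᵥ w = v ⬝ᵥ (Mᵀ *ᵥ w) := by
    intro M v w
    rw [dotProduct_comm, dotProduct_mulVec, Matrix.mulVec_transpose,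
      dotProduct_comm (w ᵥ* M) v]
  have h1 : e' ⬝ᵥ (Q *ᵥ e t) = e t ⬝ᵥ (((A - P t * G)ᵀ * Q) *ᵥ e t) := by
    rw [he', hstep, ← Matrix.mulVec_mulVec]
  have h2 : e t ⬝ᵥ (Q *ᵥ e') = e t ⬝ᵥ ((Q * (A - P t * G)) *ᵥ e t) := by
    rw [he', Matrix.mulVec_mulVec]
  have hcollect : e t ⬝ᵥ (((A - P t * G)ᵀ * Q) *ᵥ e t) +
      (e t ⬝ᵥ (Q' *ᵥ e t) + e t ⬝ᵥ ((Q * (A - P t * G)) *ᵥ e t)) =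
      e t ⬝ᵥ (((A - P t * G)ᵀ * Q + Q' + Q * (A - P t * G)) *ᵥ e t) := by
    simp [Matrix.add_mulVec, dotProduct_add]
    ring
  have hQPx : ∀ X : Matrix (Fin n) (Fin n) ℝ, Q * (P t * X) = X := by
    intro X; rw [← Matrix.mul_assoc, hQP, Matrix.one_mul]
  have hPQx : ∀ X : Matrix (Fin n) (Fin n) ℝ, P t * (Q * X) = X := by
    intro X; rw [← Matrix.mul_assoc, hPQ, Matrix.one_mul]
  have hN : (A - P t * G)ᵀ * Q + Q' + Q * (A - P t * G) = -(Q * W * Q + G) := by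
    rw [hQ', hPd, Matrix.transpose_sub, Matrix.transpose_mul, hGsym, hPsym]
    simp only [Matrix.mul_add, Matrix.add_mul, Matrix.mul_sub, Matrix.sub_mul,
      Matrix.mul_assoc, hQP, hPQ, hQPx, hPQx, Matrix.mul_one, Matrix.one_mul, neg_add]
    abel
  rw [h1, h2, hcollect, hN, Matrix.neg_mulVec, dotProduct_neg]
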